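/- Let A be a max-plus automaton over alphabet Σ in which all states are both initial and final, defined by μ: Σ → M_d(Z_max), and let Γ = { μ(a) : a ∈ Σ } (Σ finite and nonempty). Then the following are equivalent: (1) [[A]](w) ≥ 0 for every nonempty word w; (2) every matrix M in the semigroup generated by Γ satisfies ‖M‖_∞ ≥ 0; (3) every matrix M in the semigroup generated by Γ satisfies ρ(M) ≥ 0; (4) the joint spectral radius ρ(Γ) ≥ 0. -/

import Mathlib

open Filter

/-- The tropical (max-plus) semiring ℤ ∪ {-∞}: addition is max (lattice sup),
`+` is the tropical product with `⊥` absorbing. -/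
abbrev Zmax : Type := WithBot ℤ

/-- Square matrices over `Zmax`. -/
abbrev Mat (d : ℕ) : Type := Fin d → Fin d → Zmax

/-- Tropical matrix product: `(A⊗B) i j = max_k (A i k + B k j)`. -/
def tmul {d : ℕ} (A B : Mat d) : Mat d :=
  fun i j => Finset.univ.sup fun k => A i k + B k j

/-- Maximal entry of a matrix (`-∞` for the all-`⊥` matrix). -/
def tnorm {d : ℕ} (M : Mat d) : Zmax :=
  Finset.univ.sup fun i => Finset.univ.sup fun j => M i j

/-- Product of a list of matrices (junk value, the all-`⊥` matrix, on `[]`;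
only used on nonempty lists). -/
def prodL {d : ℕ} : List (Mat d) → Mat d
  | [] => fun _ _ => ⊥
  | [M] => M
  | M :: N :: L => tmul M (prodL (N :: L))

/-- Tropical identity matrix. -/
def tId (d : ℕ) : Mat d := fun i j => if i = j then (0 : Zmax) else ⊥

/-- Tropical matrix power. -/
def tpow {d : ℕ} (M : Mat d) : ℕ → Mat d
  | 0 => tId d
  | n+1 => tmul M (tpow M n)

/-- The subsemigroup generated by a set of matrices: all nonempty finite products. -/
def semi {d : ℕ} (Γ : Set (Mat d)) : Set (Mat d) :=
  {M | ∃ L : List (Mat d), L ≠ [] ∧ (∀ N ∈ L, N ∈ Γ) ∧ prodL L = M}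

/-- Embedding of `Zmax = ℤ ∪ {-∞}` into `EReal`. -/
noncomputable def z2e (x : Zmax) : EReal :=
  WithBot.recBotCoe ⊥ (fun n : ℤ => ((n : ℝ) : EReal)) x

/-- `minNorm Γ ℓ` is the minimum over all products of `ℓ` matrices from `Γ`
of `‖M₁⋯M_ℓ‖_∞ / ℓ`, as an extended real. -/
noncomputable def minNorm {d : ℕ} (Γ : Set (Mat d)) (ℓ : ℕ) : EReal :=
  sInf {x | ∃ L : List (Mat d), L.length = ℓ ∧ (∀ N ∈ L, N ∈ Γ) ∧
    x = z2e (tnorm (prodL L)) / (ℓ : EReal)}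

/-- Joint spectral radius: `inf_{ℓ>0} min{ ‖M₁⋯M_ℓ‖_∞/ℓ : Mᵢ ∈ Γ }`. -/
noncomputable def jsr {d : ℕ} (Γ : Set (Mat d)) : EReal :=
  ⨅ (ℓ : ℕ) (_ : 0 < ℓ), minNorm Γ ℓ

/-- Weight of the cycle `c 0 → c 1 → ⋯ → c ℓ → c 0` (length `ℓ+1`),
addition of `Fin (ℓ+1)` being cyclic. -/
def cycWeight {d : ℕ} (M : Mat d) {ℓ : ℕ} (c : Fin (ℓ+1) → Fin d) : Zmax :=
  ∑ k : Fin (ℓ+1), M (c k) (c (k+1))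

/-- Tropical spectral radius of a single matrix: the maximal average weight of
cycles in the graph of `M` (and `-∞` if there is no cycle of finite weight). -/
noncomputable def rho {d : ℕ} (M : Mat d) : EReal :=
  ⨆ (ℓ : ℕ) (c : Fin (ℓ+1) → Fin d), z2e (cycWeight M c) / ((ℓ+1 : ℕ) : EReal)

/-- A critical cycle: a cycle with finite weight whose average weight is `rho M`. -/
def IsCritCycle {d : ℕ} (M : Mat d) {ℓ : ℕ} (c : Fin (ℓ+1) → Fin d) : Prop :=
  cycWeight M c ≠ ⊥ ∧ z2e (cycWeight M c) / ((ℓ+1 : ℕ) : EReal) = rho M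

/-- Edges of the critical graph: edges lying on some critical cycle. -/
def critEdge {d : ℕ} (M : Mat d) (i j : Fin d) : Prop :=
  ∃ (ℓ : ℕ) (c : Fin (ℓ+1) → Fin d) (k : Fin (ℓ+1)),
    IsCritCycle M c ∧ c k = i ∧ c (k+1) = j

/-- Vertices of the critical graph. -/
def critVertex {d : ℕ} (M : Mat d) (i : Fin d) : Prop :=
  ∃ j, critEdge M i j ∨ critEdge M j i

/-- Strongly connected components of the critical graph: maximal sets of critical
vertices that are pairwise connected by paths in the critical graph. -/
def IsSCC {d : ℕ} (M : Mat d) (S : Set (Fin d)) : Prop :=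
  (∀ i ∈ S, critVertex M i) ∧
  (∀ i ∈ S, ∀ j ∈ S, Relation.ReflTransGen (critEdge M) i j) ∧
  (∀ T : Set (Fin d), S ⊆ T → (∀ i ∈ T, critVertex M i) →
    (∀ i ∈ T, ∀ j ∈ T, Relation.ReflTransGen (critEdge M) i j) → T = S)

/-- Greatest common divisor of a set of natural numbers. -/
noncomputable def setGcd (A : Set ℕ) : ℕ :=
  sInf {g | (∀ a ∈ A, g ∣ a) ∧ ∀ h, (∀ a ∈ A, h ∣ a) → h ∣ g}

/-- Cyclicity of a strongly connected component `S` of the critical graph of `M`: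
the gcd of the lengths of the cycles of the critical graph lying in `S`. -/
noncomputable def cyclicity {d : ℕ} (M : Mat d) (S : Set (Fin d)) : ℕ :=
  setGcd {n | ∃ (ℓ : ℕ) (c : Fin (ℓ+1) → Fin d), n = ℓ + 1 ∧
    (∀ k, critEdge M (c k) (c (k+1))) ∧ (∀ k, c k ∈ S)}

/-- Ultimate rank of a matrix: the sum of the cyclicities of the strongly
connected components of its critical graph. -/
noncomputable def urk {d : ℕ} (M : Mat d) : ℕ :=
  ∑ᶠ (S : Set (Fin d)) (_ : IsSCC M S), cyclicity M S

/-- `k ⊙ M`: add the integer `k` to every entry. -/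
def kadd {d : ℕ} (k : ℤ) (M : Mat d) : Mat d := fun i j => (k : Zmax) + M i j

/-- Value `I M F` computed from an initial row vector, a matrix and a final
column vector. -/
def runVal {d : ℕ} (I : Fin d → Zmax) (M : Mat d) (F : Fin d → Zmax) : Zmax :=
  Finset.univ.sup fun i => Finset.univ.sup fun j => I i + M i j + F j


/-! ### Auxiliary lemmas -/

section auxlemmas
variable {d : ℕ}

lemma zsup_add {ι : Type*} (s : Finset ι) (f : ι → Zmax) (a : Zmax) :
    s.sup f + a = s.sup fun x => f x + a :=
  Finset.comp_sup_eq_sup_comp (· + a)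
    (fun _ _ => (add_left_mono (α := Zmax) (a := a)).map_max) (by simp)

lemma zadd_sup {ι : Type*} (s : Finset ι) (f : ι → Zmax) (a : Zmax) :
    a + s.sup f = s.sup fun x => a + f x :=
  Finset.comp_sup_eq_sup_comp (a + ·)
    (fun _ _ => (add_right_mono (α := Zmax) (a := a)).map_max) (by simp)

lemma tmul_assoc (A B C : Mat d) : tmul (tmul A B) C = tmul A (tmul B C) := by
  funext i j
  unfold tmul
  simp only [zsup_add, zadd_sup, add_assoc]
  exact Finset.sup_comm _ _ _

lemma coe_nsmul (n : ℕ) (x : ℤ) : n • ((x : ℤ) : Zmax) = (((n : ℤ) * x : ℤ) : Zmax) := by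
  induction n with
  | zero => simp
  | succ n ih => rw [succ_nsmul, ih, ← WithBot.coe_add]; congr 1; push_cast; ring

lemma zmax_le_neg_one {x : Zmax} (h : ¬ (0 : Zmax) ≤ x) : x ≤ ((-1 : ℤ) : Zmax) := by
  induction x using WithBot.recBotCoe with
  | bot => exact bot_le
  | coe m =>
    refine WithBot.coe_le_coe.mpr ?_
    by_contra hm
    exact h (by exact_mod_cast (by omega : (0:ℤ) ≤ m))

lemma z2e_coe (m : ℤ) : z2e (m : Zmax) = ((m : ℝ) : EReal) := rfl

lemma z2e_mono : Monotone z2e := by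
  intro x y h
  induction x using WithBot.recBotCoe with
  | bot => exact bot_le
  | coe m =>
    induction y using WithBot.recBotCoe with
    | bot => simp at h
    | coe n =>
      rw [z2e_coe, z2e_coe]
      exact_mod_cast WithBot.coe_le_coe.mp h

lemma z2e_nonneg {x : Zmax} : (0 : EReal) ≤ z2e x ↔ (0 : Zmax) ≤ x := by
  induction x using WithBot.recBotCoe with
  | bot => simp [z2e]
  | coe m =>
    rw [z2e_coe]
    constructor
    · intro h
      have : (0:ℝ) ≤ (m:ℝ) := EReal.coe_nonneg.mp h
      exact_mod_cast (by exact_mod_cast this : (0:ℤ) ≤ m)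
    · intro h
      refine EReal.coe_nonneg.mpr ?_
      exact_mod_cast (by exact_mod_cast h : (0:ℤ) ≤ m)

lemma natE (n : ℕ) : ((n : ℕ) : EReal) = ((n : ℝ) : EReal) := rfl

lemma ediv_nat_nonneg_iff {y : EReal} {ℓ : ℕ} (hℓ : 0 < ℓ) :
    (0 : EReal) ≤ y / ((ℓ : ℕ) : EReal) ↔ 0 ≤ y := by
  have hb : (0 : EReal) < ((ℓ : ℕ) : EReal) := by
    rw [natE]; exact_mod_cast (by positivity : (0:ℝ) < (ℓ:ℝ))
  rw [EReal.le_div_iff_mul_le hb (by rw [natE]; exact EReal.coe_ne_top _), zero_mul]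

lemma prodL_cons (M : Mat d) {L : List (Mat d)} (h : L ≠ []) :
    prodL (M :: L) = tmul M (prodL L) := by
  cases L with
  | nil => exact absurd rfl h
  | cons N T => rfl

lemma prodL_append {L1 L2 : List (Mat d)} (h1 : L1 ≠ []) (h2 : L2 ≠ []) :
    prodL (L1 ++ L2) = tmul (prodL L1) (prodL L2) := by
  induction L1 with
  | nil => exact absurd rfl h1
  | cons M T ih =>
    cases T with
    | nil =>
      show prodL (M :: L2) = tmul (prodL [M]) (prodL L2)
      rw [prodL_cons M h2]; rfl
    | cons N T' =>
      have hne : (N :: T') ++ L2 ≠ [] := by simp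
      calc prodL ((M :: N :: T') ++ L2) = tmul M (prodL ((N :: T') ++ L2)) := rfl
        _ = tmul M (tmul (prodL (N :: T')) (prodL L2)) := by rw [ih (by simp)]
        _ = tmul (tmul M (prodL (N :: T'))) (prodL L2) := (tmul_assoc _ _ _).symm
        _ = tmul (prodL (M :: N :: T')) (prodL L2) := rfl

lemma semi_mul {Γ : Set (Mat d)} {M N : Mat d} (hM : M ∈ semi Γ) (hN : N ∈ semi Γ) :
    tmul M N ∈ semi Γ := by
  obtain ⟨L1, h1, hm1, rfl⟩ := hM
  obtain ⟨L2, h2, hm2, rfl⟩ := hN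
  refine ⟨L1 ++ L2, by simp [h1], ?_, prodL_append h1 h2⟩
  intro x hx
  rcases List.mem_append.mp hx with h | h
  exacts [hm1 _ h, hm2 _ h]

lemma tmul_tId (M : Mat d) : tmul M (tId d) = M := by
  funext i j
  apply le_antisymm
  · apply Finset.sup_le
    intro k _
    by_cases h : k = j
    · subst h; simp [tId]
    · simp [tId, h]
  · have := Finset.le_sup (f := fun k => M i k + tId d k j) (Finset.mem_univ j)
    simpa [tId, tmul] using this

lemma tpow_mem {Γ : Set (Mat d)} {M : Mat d} (hM : M ∈ semi Γ) :
    ∀ n, tpow M (n+1) ∈ semi Γ := by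
  intro n
  induction n with
  | zero => show tmul M (tId d) ∈ semi Γ; rwa [tmul_tId]
  | succ n ih => exact semi_mul hM ih

lemma entry_le_tnorm (M : Mat d) (i j : Fin d) : M i j ≤ tnorm M :=
  le_trans (Finset.le_sup (f := fun j => M i j) (Finset.mem_univ j))
    (Finset.le_sup (f := fun i => Finset.univ.sup fun j => M i j) (Finset.mem_univ i))

lemma tpow_path (M : Mat d) (hd : 0 < d) :
    ∀ (n : ℕ) (i j : Fin d), tpow M n i j = ⊥ ∨
      ∃ p : ℕ → Fin d, p 0 = i ∧ p n = j ∧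
        tpow M n i j ≤ ∑ k ∈ Finset.range n, M (p k) (p (k+1)) := by
  haveI : Nonempty (Fin d) := ⟨⟨0, hd⟩⟩
  intro n
  induction n with
  | zero =>
    intro i j
    by_cases h : i = j
    · subst h
      exact Or.inr ⟨fun _ => i, rfl, rfl, by simp [tpow, tId]⟩
    · exact Or.inl (by simp [tpow, tId, h])
  | succ n ih =>
    intro i j
    obtain ⟨k₀, -, hk⟩ := Finset.exists_mem_eq_sup Finset.univ Finset.univ_nonempty
      (fun k => M i k + tpow M n k j)
    have hunf : tpow M (n+1) i j = M i k₀ + tpow M n k₀ j := hk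
    rcases ih k₀ j with hb | ⟨p, hp0, hpn, hple⟩
    · left; rw [hunf, hb]; exact WithBot.add_bot _
    · right
      refine ⟨fun t => if t = 0 then i else p (t-1), rfl, by simp [hpn], ?_⟩
      rw [Finset.sum_range_succ']
      have h1 : ∀ k : ℕ, (fun t => if t = 0 then i else p (t-1)) (k+1) = p k := by
        intro k; simp
      have h2 : (∑ k ∈ Finset.range n,
          M ((fun t => if t = 0 then i else p (t-1)) (k+1))
            ((fun t => if t = 0 then i else p (t-1)) (k+1+1))) =
          ∑ k ∈ Finset.range n, M (p k) (p (k+1)) := by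
        refine Finset.sum_congr rfl fun k _ => by rw [h1 k, h1 (k+1)]
      rw [h2]
      simp only [reduceIte, h1 0, hp0]
      rw [hunf, add_comm]
      exact add_le_add_left hple _
end auxlemmas

section pumping
variable {d : ℕ}

lemma path_bound (M : Mat d) (hd : 0 < d) (K : ℤ) (hK : 0 ≤ K)
    (hMK : ∀ i j, M i j ≤ ((K : ℤ) : Zmax))
    (hcyc : ∀ (ℓ : ℕ) (c : Fin (ℓ+1) → Fin d), cycWeight M c ≤ ((-1 : ℤ) : Zmax)) :
    ∀ (n : ℕ) (p : ℕ → Fin d),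
      (∑ k ∈ Finset.range n, M (p k) (p (k+1))) ≤
        (((d : ℤ) * K - ((n / d : ℕ) : ℤ) : ℤ) : Zmax) := by
  intro n
  induction n using Nat.strong_induction_on with
  | _ n IH =>
    intro p
    by_cases hn : n < d
    · have h1 : (∑ k ∈ Finset.range n, M (p k) (p (k+1))) ≤
          ∑ _k ∈ Finset.range n, ((K : ℤ) : Zmax) :=
        Finset.sum_le_sum fun k _ => hMK _ _
      rw [Finset.sum_const, Finset.card_range, coe_nsmul] at h1
      refine h1.trans (WithBot.coe_le_coe.mpr ?_)
      rw [Nat.div_eq_of_lt hn]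
      have hnd : (n : ℤ) ≤ (d : ℤ) := by exact_mod_cast hn.le
      push_cast
      nlinarith
    · push_neg at hn
      set e : ℕ → Zmax := fun k => M (p k) (p (k+1)) with he
      obtain ⟨a, b, hab, heq⟩ := Fintype.exists_ne_map_eq_of_card_lt
        (fun t : Fin (d+1) => p (t : ℕ)) (by simp)
      have key : ∃ A B : ℕ, A < B ∧ B ≤ d ∧ p A = p B := by
        rcases lt_or_gt_of_ne hab with h | h
        · exact ⟨a, b, h, Nat.lt_succ_iff.mp b.isLt, heq⟩
        · exact ⟨b, a, h, Nat.lt_succ_iff.mp a.isLt, heq.symm⟩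
      obtain ⟨A, B, hAB, hBd, hpAB⟩ := key
      set m := B - A with hm
      have hm1 : 1 ≤ m := by omega
      have hmd : m ≤ d := by omega
      have hAm : A + m = B := by omega
      obtain ⟨ℓ, hℓ⟩ : ∃ ℓ, m = ℓ + 1 := ⟨m - 1, by omega⟩
      set c : Fin (ℓ+1) → Fin d := fun k => p (A + k) with hcdef
      have hc : cycWeight M c = ∑ k ∈ Finset.range (ℓ+1), e (A + k) := by
        rw [cycWeight, ← Fin.sum_univ_eq_sum_range (fun k => e (A + k)) (ℓ+1)]
        refine Finset.sum_congr rfl fun k _ => ?_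
        show M (c k) (c (k+1)) = M (p (A + k)) (p (A + k + 1))
        congr 1
        show p (A + ((k + 1 : Fin (ℓ+1)) : ℕ)) = p (A + (k : ℕ) + 1)
        rcases eq_or_ne k (Fin.last ℓ) with hk | hk
        · have h1 : ((k + 1 : Fin (ℓ+1)) : ℕ) = 0 := by
            rw [Fin.val_add_one, if_pos hk]
          have h2 : (k : ℕ) = ℓ := by rw [hk]; rfl
          rw [h1, h2, Nat.add_zero]
          have h3 : A + ℓ + 1 = B := by omega
          rw [h3, hpAB]
        · have h1 : ((k + 1 : Fin (ℓ+1)) : ℕ) = (k : ℕ) + 1 := by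
            rw [Fin.val_add_one, if_neg hk]
          rw [h1, Nat.add_assoc]
      set q : ℕ → Fin d := fun t => if t < A then p t else p (t + m) with hq
      have hqe : ∀ t, M (q t) (q (t+1)) = if t < A then e t else e (t + m) := by
        intro t
        simp only [hq]
        by_cases h : t < A
        · rw [if_pos h, if_pos h]
          by_cases h' : t + 1 < A
          · rw [if_pos h']
          · rw [if_neg h']
            have ht1 : t + 1 = A := by omega
            have h2 : t + 1 + m = B := by omega
            show M (p t) (p (t + 1 + m)) = e t
            rw [h2, ← hpAB, ← ht1]
        · rw [if_neg h, if_neg h, if_neg (by omega : ¬ t + 1 < A)]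
          show M (p (t + m)) (p (t + 1 + m)) = e (t + m)
          have : t + 1 + m = t + m + 1 := by omega
          rw [this]
      have hn1 : n = A + ((ℓ+1) + (n - A - m)) := by omega
      have hn2 : n - m = A + (n - A - m) := by omega
      have hsplit : (∑ k ∈ Finset.range n, e k) =
          (∑ t ∈ Finset.range A, e t) +
            ((∑ k ∈ Finset.range (ℓ+1), e (A+k)) +
              ∑ t ∈ Finset.range (n-A-m), e (A + (ℓ+1+t))) := by
        conv_lhs => rw [hn1]
        rw [Finset.sum_range_add, Finset.sum_range_add]
      have hsplit2 : (∑ t ∈ Finset.range (n-m), M (q t) (q (t+1))) =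
          (∑ t ∈ Finset.range A, e t) +
            ∑ t ∈ Finset.range (n-A-m), e (A + (ℓ+1+t)) := by
        conv_lhs => rw [hn2]
        rw [Finset.sum_range_add]
        congr 1
        · refine Finset.sum_congr rfl fun t ht => ?_
          rw [hqe t, if_pos (Finset.mem_range.mp ht)]
        · refine Finset.sum_congr rfl fun t _ => ?_
          rw [hqe (A + t), if_neg (by omega)]
          congr 1
          omega
      have hsum : (∑ k ∈ Finset.range n, e k) =
          cycWeight M c + ∑ t ∈ Finset.range (n - m), M (q t) (q (t+1)) := by
        rw [hsplit, hsplit2, hc]; abel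
      show (∑ k ∈ Finset.range n, e k) ≤ _
      rw [hsum]
      have hrec := IH (n - m) (by omega) q
      have hcycle := hcyc ℓ c
      calc cycWeight M c + ∑ t ∈ Finset.range (n - m), M (q t) (q (t+1))
          ≤ ((-1 : ℤ) : Zmax) + (((d : ℤ) * K - (((n-m) / d : ℕ) : ℤ) : ℤ) : Zmax) :=
            add_le_add hcycle hrec
        _ = (((-1) + ((d : ℤ) * K - (((n-m) / d : ℕ) : ℤ)) : ℤ) : Zmax) := by
            rw [← WithBot.coe_add]
        _ ≤ (((d : ℤ) * K - ((n / d : ℕ) : ℤ) : ℤ) : Zmax) := by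
            refine WithBot.coe_le_coe.mpr ?_
            have hdiv : n / d ≤ (n - m) / d + 1 := by
              have h1 : n ≤ (n - m) + d := by omega
              calc n / d ≤ ((n - m) + d) / d := Nat.div_le_div_right h1
                _ = (n - m) / d + 1 := Nat.add_div_right _ hd
            have h2 := Int.ofNat_le.mpr hdiv
            push_cast at h2 ⊢
            linarith
end pumping

section equivs
variable {d : ℕ}

lemma mem_semi_range_iff {α : Type} (μ : α → Mat d) (M : Mat d) :
    M ∈ semi (Set.range μ) ↔ ∃ w : List α, w ≠ [] ∧ prodL (w.map μ) = M := by
  constructor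
  · rintro ⟨L, hL, hmem, rfl⟩
    suffices h : ∃ w : List α, w.map μ = L by
      obtain ⟨w, rfl⟩ := h
      exact ⟨w, by simpa using hL, rfl⟩
    clear hL
    induction L with
    | nil => exact ⟨[], rfl⟩
    | cons N T ih =>
      obtain ⟨a, ha⟩ := hmem N (by simp)
      obtain ⟨w, hw⟩ := ih fun x hx => hmem x (by simp [hx])
      exact ⟨a :: w, by simp [ha, hw]⟩
  · rintro ⟨w, hw, rfl⟩
    refine ⟨w.map μ, by simpa using hw, ?_, rfl⟩
    rintro N hN
    obtain ⟨a, -, rfl⟩ := List.mem_map.mp hN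
    exact ⟨a, rfl⟩

lemma rho_le_of_cycles_le {M : Mat d}
    (h : ∀ i j, M i j ≤ ((-1 : ℤ) : Zmax)) :
    rho M ≤ ((-1 : ℝ) : EReal) := by
  rw [rho]
  refine iSup₂_le fun ℓ c => ?_
  have hb : (0 : EReal) < ((ℓ + 1 : ℕ) : EReal) := by
    rw [natE]; exact_mod_cast (by positivity : (0:ℝ) < ((ℓ+1 : ℕ):ℝ))
  rw [EReal.div_le_iff_le_mul hb (by rw [natE]; exact EReal.coe_ne_top _)]
  calc z2e (cycWeight M c) ≤ z2e ((((ℓ+1 : ℕ) : ℤ) * (-1) : ℤ) : Zmax) := by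
        refine z2e_mono ?_
        have h1 : cycWeight M c ≤ ∑ _k : Fin (ℓ+1), ((-1 : ℤ) : Zmax) :=
          Finset.sum_le_sum fun k _ => h _ _
        rwa [Finset.sum_const, Finset.card_univ, Fintype.card_fin, coe_nsmul] at h1
    _ = ((ℓ + 1 : ℕ) : EReal) * ((-1 : ℝ) : EReal) := by
        rw [z2e_coe, natE, ← EReal.coe_mul]
        norm_num

lemma three_to_two {Γ : Set (Mat d)} (H : ∀ M ∈ semi Γ, (0 : EReal) ≤ rho M) :
    ∀ M ∈ semi Γ, (0 : Zmax) ≤ tnorm M := by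
  intro M hM
  by_contra h
  have ht : tnorm M ≤ ((-1 : ℤ) : Zmax) := zmax_le_neg_one h
  have hent : ∀ i j, M i j ≤ ((-1 : ℤ) : Zmax) := fun i j =>
    (entry_le_tnorm M i j).trans ht
  have h1 := (H M hM).trans (rho_le_of_cycles_le hent)
  have : ¬ ((0 : EReal) ≤ ((-1 : ℝ) : EReal)) := by
    rw [not_le]; exact_mod_cast (by norm_num : (-1 : ℝ) < 0)
  exact this h1

lemma two_to_three {Γ : Set (Mat d)} (H : ∀ M ∈ semi Γ, (0 : Zmax) ≤ tnorm M) :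
    ∀ M ∈ semi Γ, (0 : EReal) ≤ rho M := by
  intro M hM
  by_contra hrho
  have hd : 0 < d := by
    rcases Nat.eq_zero_or_pos d with h | h
    · exfalso
      subst h
      have h0 := H M hM
      rw [tnorm] at h0
      simp at h0
    · exact h
  obtain ⟨K, hKeq, hK0⟩ : ∃ K : ℤ, tnorm M = (K : Zmax) ∧ 0 ≤ K := by
    have h0 := H M hM
    cases htn : tnorm M with
    | none =>
      rw [htn] at h0
      exact absurd h0 (by simp [WithBot.none_eq_bot])
    | some K =>
      rw [htn, WithBot.some_eq_coe] at h0
      exact ⟨K, WithBot.some_eq_coe K, by exact_mod_cast h0⟩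
  have hMK : ∀ i j, M i j ≤ ((K : ℤ) : Zmax) := fun i j => hKeq ▸ entry_le_tnorm M i j
  have hcyc : ∀ (ℓ : ℕ) (c : Fin (ℓ+1) → Fin d), cycWeight M c ≤ ((-1 : ℤ) : Zmax) := by
    intro ℓ c
    refine zmax_le_neg_one fun hge => hrho ?_
    have h1 : (0 : EReal) ≤ z2e (cycWeight M c) / ((ℓ + 1 : ℕ) : EReal) :=
      (ediv_nat_nonneg_iff (Nat.succ_pos ℓ)).mpr (z2e_nonneg.mpr hge)
    refine h1.trans ?_
    rw [rho]
    exact le_iSup₂ (f := fun ℓ (c : Fin (ℓ+1) → Fin d) =>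
      z2e (cycWeight M c) / ((ℓ + 1 : ℕ) : EReal)) ℓ c
  -- pumping
  set n := d * (d * K.toNat + 1) with hn
  obtain ⟨n', hn'⟩ : ∃ n', n = n' + 1 := ⟨n - 1, by
    have : 0 < n := by positivity
    omega⟩
  have hmem : tpow M n ∈ semi Γ := hn' ▸ tpow_mem hM n'
  have h0 := H _ hmem
  haveI : Nonempty (Fin d) := ⟨⟨0, hd⟩⟩
  obtain ⟨i, -, hi⟩ := Finset.exists_mem_eq_sup Finset.univ Finset.univ_nonempty
    (fun i => Finset.univ.sup fun j => tpow M n i j)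
  obtain ⟨j, -, hj⟩ := Finset.exists_mem_eq_sup Finset.univ Finset.univ_nonempty
    (fun j => tpow M n i j)
  rw [tnorm, hi, hj] at h0
  rcases tpow_path M hd n i j with hb | ⟨p, -, -, hple⟩
  · rw [hb] at h0; simp at h0
  · have hbd := path_bound M hd K hK0 hMK hcyc n p
    have h2 : (0 : Zmax) ≤ (((d : ℤ) * K - ((n / d : ℕ) : ℤ) : ℤ) : Zmax) :=
      le_trans h0 (hple.trans hbd)
    have hdiv : (n / d : ℕ) = d * K.toNat + 1 := by
      rw [hn]; exact Nat.mul_div_cancel_left _ hd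
    rw [hdiv] at h2
    have h3 : (0 : ℤ) ≤ (d : ℤ) * K - ((d * K.toNat + 1 : ℕ) : ℤ) := by exact_mod_cast h2
    have h4 : ((d * K.toNat + 1 : ℕ) : ℤ) = (d : ℤ) * K + 1 := by
      push_cast
      rw [Int.toNat_of_nonneg hK0]
    omega

lemma two_iff_four {Γ : Set (Mat d)} :
    (∀ M ∈ semi Γ, (0 : Zmax) ≤ tnorm M) ↔ (0 : EReal) ≤ jsr Γ := by
  constructor
  · intro H
    rw [jsr]
    refine le_iInf fun ℓ => le_iInf fun hℓ => le_sInf ?_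
    rintro x ⟨L, hlen, hmem, rfl⟩
    have hL : L ≠ [] := by
      intro h; subst h; simp at hlen; omega
    have h0 : (0 : Zmax) ≤ tnorm (prodL L) := H _ ⟨L, hL, hmem, rfl⟩
    rw [← hlen]
    exact (ediv_nat_nonneg_iff (hlen ▸ hℓ)).mpr (z2e_nonneg.mpr h0)
  · intro H M hM
    obtain ⟨L, hL, hmem, rfl⟩ := hM
    have hlen : 0 < L.length := List.length_pos_iff.mpr hL
    have h1 : jsr Γ ≤ minNorm Γ L.length := by
      rw [jsr]
      exact iInf₂_le _ hlen
    have h2 : minNorm Γ L.length ≤ z2e (tnorm (prodL L)) / ((L.length : ℕ) : EReal) :=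
      sInf_le ⟨L, rfl, hmem, rfl⟩
    have h3 := H.trans (h1.trans h2)
    exact z2e_nonneg.mp ((ediv_nat_nonneg_iff hlen).mp h3)
end equivs

theorem stmt_8 {α : Type} [Fintype α] [Nonempty α] {d : ℕ} (μ : α → Mat d)
    (I F : Fin d → Zmax) (hI : ∀ i, I i = 0) (hF : ∀ j, F j = 0) :
    ((∀ w : List α, w ≠ [] → (0 : Zmax) ≤ runVal I (prodL (w.map μ)) F) ↔
      (∀ M ∈ semi (Set.range μ), (0 : Zmax) ≤ tnorm M)) ∧
    ((∀ M ∈ semi (Set.range μ), (0 : Zmax) ≤ tnorm M) ↔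
      (∀ M ∈ semi (Set.range μ), (0 : EReal) ≤ rho M)) ∧
    ((∀ M ∈ semi (Set.range μ), (0 : EReal) ≤ rho M) ↔
      (0 : EReal) ≤ jsr (Set.range μ)) := by 
  have e1 : ∀ M : Mat d, runVal I M F = tnorm M := by
    intro M
    rw [runVal, tnorm]
    simp only [hI, hF, zero_add, add_zero]
  refine ⟨?_, ⟨two_to_three, three_to_two⟩, ?_⟩
  · constructor
    · intro h M hM
      obtain ⟨w, hw, rfl⟩ := (mem_semi_range_iff μ M).mp hM
      rw [← e1]
      exact h w hw
    · intro h w hw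
      rw [e1]
      exact h _ ((mem_semi_range_iff μ _).mpr ⟨w, hw, rfl⟩)
  · constructor
    · intro h3
      exact two_iff_four.mp (three_to_two h3)
    · intro h4
      exact two_to_three (two_iff_four.mpr h4)
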